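/- Fix a real R ≠ 0, let G x = 1 − (Σ_μ ε μ * (x μ)²)/(4R²), and define the frame fields e ν n x := G x * (if ν = n then 1 else 0), the Christoffel symbols Γ ν μ λ x := (1/(2 R² * G x)) * ( (ε μ * x μ) * (if ν = λ then 1 else 0) + (ε λ * x λ) * (if ν = μ then 1 else 0) − x ν * η μ λ ), the spin connection w k n m x := −(1/(2R²)) * ( (ε n * x n) * η m k − (ε m * x m) * η n k ), and w' μ n m x := (G x)⁻¹ * ε m * (w μ n m x). Then the frame fields are covariantly constant: for every x with G x ≠ 0 and all μ, n, ν : Fin D, ∂_μ (fun y => e ν n y) x + Σ_λ Γ ν μ λ x * e λ n x + Σ_m w' μ n m x * e ν m x = 0. -/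

import Mathlib

noncomputable section

def eps (p : ℕ) {D : ℕ} (m : Fin D) : ℝ := if (m : ℕ) < p then -1 else 1

def eta (p : ℕ) {D : ℕ} (m n : Fin D) : ℝ := if m = n then eps p m else 0

lemma eps_sq (p : ℕ) {D : ℕ} (m : Fin D) : eps p m * eps p m = 1 := by
  unfold eps; split <;> norm_num

lemma eps_cases (p : ℕ) {D : ℕ} (m : Fin D) : eps p m = 1 ∨ eps p m = -1 := by
  unfold eps; split <;> simp

lemma hasFDerivAt_G {D : ℕ} (p : ℕ) (R : ℝ) (x : Fin D → ℝ) :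
    HasFDerivAt (fun y : Fin D → ℝ => 1 - (∑ i : Fin D, eps p i * (y i) ^ 2) / (4 * R ^ 2))
      (-(((4 * R ^ 2)⁻¹ : ℝ) • ∑ i : Fin D, (eps p i * 2 * x i) •
        (ContinuousLinearMap.proj i : (Fin D → ℝ) →L[ℝ] ℝ))) x := by
  have hS : HasFDerivAt (fun y : Fin D → ℝ => ∑ i : Fin D, eps p i * (y i) ^ 2)
      (∑ i : Fin D, (eps p i * 2 * x i) •
        (ContinuousLinearMap.proj i : (Fin D → ℝ) →L[ℝ] ℝ)) x := by
    apply HasFDerivAt.fun_sum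
    intro i _
    have h1 : HasFDerivAt (fun y : Fin D → ℝ => y i)
        (ContinuousLinearMap.proj i : (Fin D → ℝ) →L[ℝ] ℝ) x := by
      exact (ContinuousLinearMap.proj i : (Fin D → ℝ) →L[ℝ] ℝ).hasFDerivAt
    have h2 := (h1.mul h1).const_mul (eps p i)
    refine (h2.congr_fderiv ?_).congr_of_eventuallyEq (Filter.Eventually.of_forall fun y => ?_)
    · ext v
      simp
      ring
    · simp only [Pi.mul_apply]; ring
  have hfun : (fun y : Fin D → ℝ => 1 - (∑ i : Fin D, eps p i * (y i) ^ 2) / (4 * R ^ 2))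
      = (fun y : Fin D → ℝ => 1 - (4 * R ^ 2)⁻¹ * ∑ i : Fin D, eps p i * (y i) ^ 2) := by
    funext y; rw [div_eq_inv_mul]
  rw [hfun]
  exact (hS.const_mul ((4 * R ^ 2)⁻¹ : ℝ)).const_sub 1

theorem stmt_11 (p q : ℕ) (R : ℝ) (hR : R ≠ 0) :
    let D := p + q
    let G : (Fin D → ℝ) → ℝ := fun x => 1 - (∑ μ : Fin D, eps p μ * (x μ) ^ 2) / (4 * R ^ 2)
    let pd : Fin D → ((Fin D → ℝ) → ℝ) → ((Fin D → ℝ) → ℝ) :=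
      fun n f x => fderiv ℝ f x (Pi.single n 1)
    let e : Fin D → Fin D → (Fin D → ℝ) → ℝ :=
      fun ν n x => G x * (if ν = n then (1 : ℝ) else 0)
    let Γ : Fin D → Fin D → Fin D → (Fin D → ℝ) → ℝ :=
      fun ν μ lam x => (1 / (2 * R ^ 2 * G x)) *
        ((eps p μ * x μ) * (if ν = lam then (1 : ℝ) else 0) +
          (eps p lam * x lam) * (if ν = μ then (1 : ℝ) else 0) - x ν * eta p μ lam)
    let w : Fin D → Fin D → Fin D → (Fin D → ℝ) → ℝ :=
      fun k n m x => -(1 / (2 * R ^ 2)) *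
        ((eps p n * x n) * eta p m k - (eps p m * x m) * eta p n k)
    let w' : Fin D → Fin D → Fin D → (Fin D → ℝ) → ℝ :=
      fun μ n m x => (G x)⁻¹ * eps p m * w μ n m x
    ∀ x : Fin D → ℝ, G x ≠ 0 → ∀ μ n ν : Fin D,
      pd μ (fun y => e ν n y) x + (∑ lam : Fin D, Γ ν μ lam x * e lam n x) +
        (∑ m : Fin D, w' μ n m x * e ν m x) = 0 := by
  intro D G pd e Γ w w' x hG μ n ν
  have hGd := hasFDerivAt_G p R x
  have he : HasFDerivAt (fun y => e ν n y)
      ((if ν = n then (1:ℝ) else 0) • (-(((4 * R ^ 2)⁻¹ : ℝ) • ∑ i : Fin D, (eps p i * 2 * x i) •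
        (ContinuousLinearMap.proj i : (Fin D → ℝ) →L[ℝ] ℝ)))) x := by
    have := hGd.mul_const (if ν = n then (1:ℝ) else 0)
    convert this using 1
  have hpd : pd μ (fun y => e ν n y) x
      = (if ν = n then (1:ℝ) else 0) * (-(eps p μ * 2 * x μ) / (4 * R ^ 2)) := by
    show fderiv ℝ (fun y => e ν n y) x (Pi.single μ 1) = _
    rw [he.fderiv]
    by_cases h : ν = n <;>
      simp [h, ContinuousLinearMap.smul_apply, ContinuousLinearMap.neg_apply,
        ContinuousLinearMap.sum_apply, Pi.single_apply, Finset.sum_ite_eq',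
        ContinuousLinearMap.proj_apply] <;> ring
  rw [hpd]
  have hsum1 : (∑ lam : Fin D, Γ ν μ lam x * e lam n x) = Γ ν μ n x * G x := by
    simp only [e, mul_ite, mul_one, mul_zero]
    rw [Finset.sum_ite_eq' Finset.univ n (fun lam => Γ ν μ lam x * G x)]
    simp
  have hsum2 : (∑ m : Fin D, w' μ n m x * e ν m x) = w' μ n ν x * G x := by
    simp only [e, mul_ite, mul_one, mul_zero]
    rw [Finset.sum_ite_eq Finset.univ ν (fun m => w' μ n m x * G x)]
    simp
  rw [hsum1, hsum2]
  have hR2 : R ^ 2 ≠ 0 := pow_ne_zero 2 hR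
  simp only [Γ, w', w, eta]
  rcases eq_or_ne ν n with h1 | h1 <;> rcases eq_or_ne ν μ with h2 | h2 <;>
    rcases eq_or_ne μ n with h3 | h3
  all_goals try subst h1
  all_goals try subst h2
  all_goals try subst h3
  all_goals simp_all only [ne_eq, if_true, if_false, ite_true, ite_false, not_false_eq_true,
    not_true_eq_false]
  all_goals try rw [if_neg fun h => h3 h.symm]
  all_goals rcases eps_cases p ν with hν | hν <;> simp only [hν] <;> field_simp <;> try ring
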